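/- For all integers m ≥ 1 and n ≥ 0, there is a bijection between the set of ordered m-tuples (F a forest) of colored complete ternary trees whose total number p of internal vertices satisfies 0 ≤ p ≤ ⌊n/2⌋ and whose color numbers sum to n−2p, and the set of ordered m-tuples of complete binary trees with n internal vertices in total. In particular these two sets have the same cardinality, namely (m/(2n+m))·C(2n+m, n). -/

import Mathlib

/-- A complete binary tree: every vertex is a leaf or has exactly two children. -/
inductive BinTree : Type
  | leaf : BinTree
  | node : BinTree → BinTree → BinTree

/-- The number of internal vertices of a complete binary tree. -/
def BinTree.internals : BinTree → ℕ
  | .leaf => 0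
  | .node l r => l.internals + r.internals + 1

/-- The total number of vertices of a complete binary tree. -/
def BinTree.vertices : BinTree → ℕ
  | .leaf => 1
  | .node l r => l.vertices + r.vertices + 1

/-- The number of leaves of a complete binary tree. -/
def BinTree.leaves : BinTree → ℕ
  | .leaf => 1
  | .node l r => l.leaves + r.leaves

/-- A complete ternary tree: every vertex is a leaf or has exactly three children. -/
inductive TernTree : Type
  | leaf : TernTree
  | node : TernTree → TernTree → TernTree → TernTree

/-- The number of internal vertices of a complete ternary tree. -/
def TernTree.internals : TernTree → ℕ
  | .leaf => 0
  | .node a b c => a.internals + b.internals + c.internals + 1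

/-- The total number of vertices of a complete ternary tree. -/
def TernTree.vertices : TernTree → ℕ
  | .leaf => 1
  | .node a b c => a.vertices + b.vertices + c.vertices + 1

/-- A colored complete ternary tree: a complete ternary tree each of whose vertices
carries a nonnegative integer color number. -/
inductive CTernTree : Type
  | leaf : ℕ → CTernTree
  | node : ℕ → CTernTree → CTernTree → CTernTree → CTernTree

/-- The number of internal vertices of a colored complete ternary tree. -/
def CTernTree.internals : CTernTree → ℕ
  | .leaf _ => 0
  | .node _ a b c => a.internals + b.internals + c.internals + 1

/-- The sum of the color numbers of a colored complete ternary tree. -/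
def CTernTree.colorSum : CTernTree → ℕ
  | .leaf k => k
  | .node k a b c => k + a.colorSum + b.colorSum + c.colorSum

/-- The underlying (uncolored) complete ternary tree of a colored one. -/
def CTernTree.forget : CTernTree → TernTree
  | .leaf _ => .leaf
  | .node _ a b c => .node a.forget b.forget c.forget

open Finset


set_option linter.unreachableTactic false
set_option linter.unusedTactic false

/-! bijection -/

def addSpine : ℕ → BinTree → BinTree
  | 0, t => t
  | k+1, t => .node .leaf (addSpine k t)

def toBin : CTernTree → BinTree
  | .leaf k => addSpine k .leaf
  | .node k a b c => addSpine k (.node (.node (toBin a) (toBin b)) (toBin c))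

def addColor : ℕ → CTernTree → CTernTree
  | k, .leaf j => .leaf (k + j)
  | k, .node j a b c => .node (k + j) a b c

def toCTern : BinTree → CTernTree
  | .leaf => .leaf 0
  | .node .leaf r => addColor 1 (toCTern r)
  | .node (.node a b) r => .node 0 (toCTern a) (toCTern b) (toCTern r)

lemma addColor_zero (s : CTernTree) : addColor 0 s = s := by
  cases s <;> simp [addColor]

lemma addColor_addColor (k j : ℕ) (s : CTernTree) :
    addColor k (addColor j s) = addColor (k + j) s := by
  cases s <;> simp [addColor] <;> omega

lemma toCTern_addSpine (k : ℕ) (t : BinTree) :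
    toCTern (addSpine k t) = addColor k (toCTern t) := by
  induction k with
  | zero => simp [addSpine, addColor_zero]
  | succ k ih => rw [addSpine, toCTern, ih, addColor_addColor, Nat.add_comm]

lemma toCTern_toBin (t : CTernTree) : toCTern (toBin t) = t := by
  induction t with
  | leaf k => simp [toBin, toCTern_addSpine, toCTern, addColor]
  | node k a b c iha ihb ihc =>
      simp [toBin, toCTern_addSpine, toCTern, iha, ihb, ihc, addColor]

lemma addSpine_add (k j : ℕ) (t : BinTree) :
    addSpine (k + j) t = addSpine k (addSpine j t) := by
  induction k with
  | zero => simp [addSpine]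
  | succ k ih => simp [Nat.succ_add, addSpine, ih]

lemma toBin_addColor (k : ℕ) (s : CTernTree) :
    toBin (addColor k s) = addSpine k (toBin s) := by
  cases s <;> simp [addColor, toBin, addSpine_add]

lemma toBin_toCTern (g : BinTree) : toBin (toCTern g) = g := by
  induction g using toCTern.induct with
  | case1 => simp [toCTern, toBin, addSpine]
  | case2 r ih => simp [toCTern, toBin_addColor, ih, addSpine]
  | case3 a b r iha ihb ihr => simp [toCTern, toBin, iha, ihb, ihr, addSpine]

def ctEquiv : CTernTree ≃ BinTree where
  toFun := toBin
  invFun := toCTern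
  left_inv := toCTern_toBin
  right_inv := toBin_toCTern

lemma internals_addSpine (k : ℕ) (t : BinTree) :
    (addSpine k t).internals = k + t.internals := by
  induction k with
  | zero => simp [addSpine]
  | succ k ih => simp [addSpine, BinTree.internals, ih]; omega

lemma internals_toBin (t : CTernTree) :
    (toBin t).internals = 2 * t.internals + t.colorSum := by
  induction t with
  | leaf k => simp [toBin, internals_addSpine, BinTree.internals, CTernTree.internals, CTernTree.colorSum]
  | node k a b c iha ihb ihc =>
      simp [toBin, internals_addSpine, BinTree.internals, CTernTree.internals,
        CTernTree.colorSum, iha, ihb, ihc]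
      ring

/-! finiteness -/

def toTree : BinTree → Tree Unit
  | .leaf => .nil
  | .node l r => .node () (toTree l) (toTree r)

lemma toTree_injective : Function.Injective toTree := by
  intro a
  induction a with
  | leaf => intro b h; cases b <;> simp [toTree] at h ⊢
  | node l r ihl ihr =>
      intro b h
      cases b with
      | leaf => simp [toTree] at h
      | node l' r' =>
          simp [toTree] at h
          rw [ihl h.1, ihr h.2]

lemma numNodes_toTree (b : BinTree) : (toTree b).numNodes = b.internals := by
  induction b with
  | leaf => simp [toTree, BinTree.internals]
  | node l r ihl ihr => simp [toTree, BinTree.internals, ihl, ihr]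

instance finite_le (n : ℕ) : Finite {b : BinTree // b.internals ≤ n} := by
  have : Function.Injective
      (fun b : {b : BinTree // b.internals ≤ n} =>
        (⟨toTree b.1, by
          simp only [Finset.mem_biUnion]
          exact ⟨b.1.internals, by simp [b.2, Nat.lt_succ_iff],
            by simp [BinaryTree.mem_treesOfNumNodesEq, numNodes_toTree]⟩⟩ :
          ((Finset.range (n+1)).biUnion Tree.treesOfNumNodesEq : Finset (Tree Unit)))) := by
    intro a b h
    simp only [Subtype.mk.injEq] at h
    exact Subtype.ext (toTree_injective h)
  exact Finite.of_injective _ this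

instance finite_forest (m n : ℕ) :
    Finite {G : Fin m → BinTree // (∑ i, (G i).internals) = n} := by
  have : Function.Injective
      (fun G : {G : Fin m → BinTree // (∑ i, (G i).internals) = n} =>
        (fun i => (⟨G.1 i, by
          refine le_of_le_of_eq ?_ G.2
          exact Finset.single_le_sum (f := fun i => (G.1 i).internals)
            (fun _ _ => Nat.zero_le _) (Finset.mem_univ i)⟩ :
          {b : BinTree // b.internals ≤ n}))) := by
    intro a b h
    apply Subtype.ext; funext i
    exact congrArg Subtype.val (congrFun h i)
  exact Finite.of_injective _ this

/-! the count -/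

noncomputable def N (m n : ℕ) : ℕ := Nat.card {G : Fin m → BinTree // (∑ i, (G i).internals) = n}

lemma internals_eq_zero {b : BinTree} (h : b.internals = 0) : b = .leaf := by
  cases b with
  | leaf => rfl
  | node l r => simp [BinTree.internals] at h

lemma N_zero_right (m : ℕ) : N m 0 = 1 := by
  have : Unique {G : Fin m → BinTree // (∑ i, (G i).internals) = 0} := by
    refine ⟨⟨⟨fun _ => .leaf, by simp [BinTree.internals]⟩⟩, ?_⟩
    rintro ⟨G, hG⟩
    apply Subtype.ext; funext i
    have : (G i).internals = 0 := by
      have h2 : (G i).internals ≤ ∑ i, (G i).internals :=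
        Finset.single_le_sum (f := fun i => (G i).internals)
          (fun _ _ => Nat.zero_le _) (Finset.mem_univ i)
      omega
    exact internals_eq_zero this
  exact Nat.card_unique
  
lemma N_zero_left (n : ℕ) : N 0 (n+1) = 0 := by
  have : IsEmpty {G : Fin 0 → BinTree // (∑ i, (G i).internals) = n+1} := by
    refine ⟨fun G => ?_⟩
    have := G.2
    simp at this
  exact Nat.card_of_isEmpty

/-- splitting equiv on the first tree -/
def pairSplit (m n : ℕ) :
    {p : BinTree × (Fin m → BinTree) //
        p.1.internals + (∑ i, (p.2 i).internals) = n + 1} ≃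
    ({G : Fin m → BinTree // (∑ i, (G i).internals) = n + 1} ⊕
     {G : Fin (m+2) → BinTree // (∑ i, (G i).internals) = n}) where
  toFun := fun x => match x with
    | ⟨(.leaf, H), h⟩ => .inl ⟨H, by simpa [BinTree.internals] using h⟩
    | ⟨(.node l r, H), h⟩ => .inr ⟨Fin.cons l (Fin.cons r H), by
        simp [Fin.sum_univ_succ, BinTree.internals] at h ⊢
        omega⟩
  invFun := fun x => match x with
    | .inl ⟨H, h⟩ => ⟨(.leaf, H), by simpa [BinTree.internals] using h⟩
    | .inr ⟨K, h⟩ => ⟨(.node (K 0) (Fin.tail K 0), Fin.tail (Fin.tail K)), by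
        simp [Fin.sum_univ_succ, Fin.tail, BinTree.internals] at h ⊢
        omega⟩
  left_inv := by
    rintro ⟨⟨t, H⟩, h⟩
    cases t with
    | leaf => rfl
    | node l r =>
        apply Subtype.ext
        simp [Fin.tail_cons, Fin.cons_zero]
  right_inv := by
    rintro (⟨H, h⟩ | ⟨K, h⟩)
    · rfl
    · simp only []
      congr 1
      apply Subtype.ext
      show Fin.cons (K 0) (Fin.cons (Fin.tail K 0) (Fin.tail (Fin.tail K))) = K
      rw [Fin.cons_self_tail, Fin.cons_self_tail]

def headSplit (m n : ℕ) :
    {G : Fin (m+1) → BinTree // (∑ i, (G i).internals) = n} ≃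
    {p : BinTree × (Fin m → BinTree) //
        p.1.internals + (∑ i, (p.2 i).internals) = n} where
  toFun := fun ⟨G, h⟩ => ⟨(G 0, Fin.tail G), by
    rw [← h]; exact (Fin.sum_univ_succ (fun i => (G i).internals)).symm⟩
  invFun := fun ⟨(t, H), h⟩ => ⟨Fin.cons t H, by
    simp [Fin.sum_univ_succ, Fin.cons_zero, Fin.cons_succ]
    simpa using h⟩
  left_inv := by
    rintro ⟨G, h⟩
    apply Subtype.ext
    exact Fin.cons_self_tail G
  right_inv := by
    rintro ⟨⟨t, H⟩, h⟩
    apply Subtype.ext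
    simp [Fin.tail_cons, Fin.cons_zero]

lemma N_succ (m n : ℕ) : N (m+1) (n+1) = N m (n+1) + N (m+2) n := by
  have e := (headSplit m (n+1)).trans (pairSplit m n)
  rw [N, Nat.card_congr e, Nat.card_sum]; rfl

lemma cast_pos' (s : ℕ) (h : 0 < s) : (s : ℚ) ≠ 0 := by
  exact_mod_cast Nat.pos_iff_ne_zero.mp h

lemma choose_algebra (m n : ℕ) :
    (m : ℚ) / (2*(n+1)+m) * ((2*(n+1)+m).choose (n+1)) +
      ((m+2 : ℕ) : ℚ) / (2*n+(m+2)) * ((2*n+(m+2)).choose n)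
      = ((m+1 : ℕ) : ℚ) / (2*(n+1)+(m+1)) * ((2*(n+1)+(m+1)).choose (n+1)) := by
  have hs : 2*(n+1)+m = 2*n+m+2 := by ring
  have hs2 : 2*n+(m+2) = 2*n+m+2 := by ring
  have hs3 : 2*(n+1)+(m+1) = 2*n+m+3 := by ring
  set s := 2*n+m+2 with hsdef
  have h1 : ((s.choose (n+1) : ℕ) : ℚ) * (n+1) = (s.choose n : ℕ) * (n+m+2) := by
    have := Nat.choose_succ_right_eq s n
    have hsub : s - n = n + m + 2 := by omega
    rw [hsub] at this
    exact_mod_cast congrArg (Nat.cast : ℕ → ℚ) this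
  have h2 : (((s+1).choose (n+1) : ℕ) : ℚ) = (s.choose n : ℕ) + (s.choose (n+1) : ℕ) := by
    exact_mod_cast congrArg (Nat.cast : ℕ → ℚ) (Nat.choose_succ_succ s n)
  have hns : (2*(n+1)+(m+1) : ℕ) = s + 1 := by omega
  rw [hs, hs2, hns, h2]
  push_cast
  have hd1 : ((s:ℚ)) ≠ 0 := cast_pos' s (by omega)
  have hd2 : ((s:ℚ)) + 1 ≠ 0 := by positivity
  field_simp
  linear_combination (-2*((m:ℚ)+2*(n:ℚ)+2)) * h1

lemma N_formula : ∀ n m : ℕ, 0 < m + n →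
    (N m n : ℚ) = (m : ℚ) / (2*n+m) * ((2*n+m).choose n) := by
  intro n
  induction n using Nat.strong_induction_on with
  | _ n ih =>
    match n with
    | 0 =>
        intro m hm
        rw [N_zero_right]
        have hm' : 0 < m := by omega
        have : ((m:ℚ)) ≠ 0 := cast_pos' m hm'
        simp [Nat.choose_zero_right]
        field_simp
    | Nat.succ n =>
        have key : ∀ m : ℕ, (N m (n+1) : ℚ)
            = (m : ℚ) / (2*(n+1)+m) * ((2*(n+1)+m).choose (n+1)) := by
          intro m
          induction m with
          | zero => rw [N_zero_left]; simp
          | succ m ihm =>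
              rw [N_succ]
              push_cast [Nat.cast_add]
              rw [ihm, ih n (by omega) (m+2) (by omega)]
              have := choose_algebra m n
              push_cast at this ⊢
              convert this using 2 <;> push_cast <;> ring_nf
        intro m _
        have := key m
        push_cast at this ⊢
        convert this using 2 <;> push_cast <;> ring_nf


/-- Forest extension of Theorem 2 of the paper: for `m ≥ 1` and `n ≥ 0` there is a
bijection between forests of `m` colored complete ternary trees whose total number `p`
of internal vertices satisfies `p ≤ ⌊n/2⌋` and whose color numbers sum to `n − 2p`,
and forests of `m` complete binary trees with `n` internal vertices in total; in
particular both sets have cardinality `(m/(2n+m))·C(2n+m,n)`. -/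
theorem colored_ternary_forests_equiv_binary_forests (m n : ℕ) (hm : 1 ≤ m) :
    Nonempty
      ({F : Fin m → CTernTree //
          (∑ i, (F i).internals) ≤ n / 2 ∧
          (∑ i, (F i).colorSum) = n - 2 * (∑ i, (F i).internals)} ≃
        {G : Fin m → BinTree // (∑ i, (G i).internals) = n}) ∧
    (Nat.card {G : Fin m → BinTree // (∑ i, (G i).internals) = n} : ℚ)
      = ((m : ℚ) / (2 * n + m)) * (Nat.choose (2 * n + m) n) := by
  constructor
  · refine ⟨Equiv.subtypeEquiv (Equiv.piCongrRight fun _ : Fin m => ctEquiv) ?_⟩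
    intro F
    have hsum : (∑ i, (toBin (F i)).internals)
        = 2 * (∑ i, (F i).internals) + ∑ i, (F i).colorSum := by
      simp only [internals_toBin]
      rw [Finset.sum_add_distrib, Finset.mul_sum]
    simp only [Equiv.piCongrRight_apply, Pi.map_apply]
    show _ ↔ (∑ i, (toBin (F i)).internals) = n
    rw [hsum]
    omega
  · have := N_formula n m (by omega)
    rw [N] at this
    rw [this]
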